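/- (Linear convergence of RSD, strongly convex case.) Under the setting of the RSD algorithm — A x^0 = b, M symmetric positive semidefinite and positive definite on ker(A), f differentiable with f(y) ≤ f(x) + ⟨∇f(x), y−x⟩ + ½(y−x)^T M(y−x) for x, y ∈ x^0 + ker(A), S^k i.i.d. from a finite distribution with Z = Σ_i P_i Z_{S_i} positive definite on ker(A), x^{k+1} = x^k − Z_{S^k} ∇f(x^k) — suppose additionally that f satisfies the strong convexity inequality f(x) ≥ f(y) + ⟨∇f(y), x−y⟩ + (σ_Z/2)(x−y)^T Z†(x−y) for all x, y ∈ x^0 + ker(A) with σ_Z > 0, and let f* be the minimum of f over {x : Ax = b}. Then for every k ≥ 0, the expected objective value satisfies E[f(x^k)] − f* ≤ (1 − σ_Z)^k (f(x^0) − f*). -/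

import Mathlib

open Matrix

-- The Moore–Penrose pseudoinverse of a real matrix, defined via the four
-- Penrose conditions (which have a unique solution for every real matrix).
open Classical in
noncomputable def mpinv {k l : Type*} [Fintype k] [Fintype l] (B : Matrix k l ℝ) :
    Matrix l k ℝ :=
  if h : ∃ X : Matrix l k ℝ,
      B * X * B = B ∧ X * B * X = X ∧ (B * X)ᵀ = B * X ∧ (X * B)ᵀ = X * B
  then h.choose else 0

/-- `P_S = I - (AS)†(AS)`, the orthogonal projection onto `ker(AS)`. -/
noncomputable def Pmat {m n p : ℕ} (A : Matrix (Fin m) (Fin n) ℝ)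
    (S : Matrix (Fin n) (Fin p) ℝ) : Matrix (Fin p) (Fin p) ℝ :=
  1 - mpinv (A * S) * (A * S)

/-- `Z_S = S P_S (P_Sᵀ Sᵀ M S P_S)† P_Sᵀ Sᵀ`. -/
noncomputable def Zmat {m n p : ℕ} (A : Matrix (Fin m) (Fin n) ℝ)
    (M : Matrix (Fin n) (Fin n) ℝ) (S : Matrix (Fin n) (Fin p) ℝ) :
    Matrix (Fin n) (Fin n) ℝ :=
  S * Pmat A S * mpinv ((Pmat A S)ᵀ * Sᵀ * M * S * Pmat A S) * (Pmat A S)ᵀ * Sᵀ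

/-- The gradient of `f : ℝ^n → ℝ`, as a vector of partial derivatives. -/
noncomputable def gradv {n : ℕ} (f : (Fin n → ℝ) → ℝ) (x : Fin n → ℝ) : Fin n → ℝ :=
  fun i => fderiv ℝ f x (Pi.single i 1)


/-! ### Auxiliary lemmas about the Moore–Penrose pseudoinverse -/

lemma sympinv_exists {l : Type*} [Fintype l] (C : Matrix l l ℝ) (hC : Cᵀ = C) :
    ∃ Y : Matrix l l ℝ, C * Y * C = C ∧ Y * C * Y = Y ∧ Yᵀ = Y ∧ C * Y = Y * C := by
  classical
  have hherm : C.IsHermitian := by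
    rw [Matrix.IsHermitian, conjTranspose_eq_transpose_of_trivial]; exact hC
  set V : Matrix l l ℝ := (Matrix.IsHermitian.eigenvectorUnitary hherm : Matrix l l ℝ) with hVdef
  have hV2 : star V * V = 1 := by
    exact (Matrix.mem_unitaryGroup_iff').mp (Matrix.IsHermitian.eigenvectorUnitary hherm).2
  set ev : l → ℝ := hherm.eigenvalues with hev
  have hCdec : C = V * diagonal ev * star V := by
    simpa using hherm.spectral_theorem
  have key : ∀ e f : l → ℝ, (V * diagonal e * star V) * (V * diagonal f * star V)
      = V * diagonal (fun i => e i * f i) * star V := by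
    intro e f
    simp only [Matrix.mul_assoc]
    rw [← Matrix.mul_assoc (star V) V, hV2, Matrix.one_mul,
      ← Matrix.mul_assoc (diagonal e) (diagonal f), diagonal_mul_diagonal]
  have hstar : ∀ e : l → ℝ, (V * diagonal e * star V)ᵀ = V * diagonal e * star V := by
    intro e
    rw [← conjTranspose_eq_transpose_of_trivial]
    simp only [conjTranspose_mul, conjTranspose_conjTranspose, star_eq_conjTranspose,
      diagonal_conjTranspose]
    simp [Matrix.mul_assoc, star_trivial]
  refine ⟨V * diagonal (fun i => if ev i = 0 then 0 else (ev i)⁻¹) * star V, ?_, ?_, ?_, ?_⟩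
  · rw [hCdec, key, key]
    congr 1
    congr 1
    exact congrArg _ (funext fun i => by by_cases h : ev i = 0 <;> simp [h] <;> field_simp)
  · rw [hCdec, key, key]
    congr 1
    congr 1
    exact congrArg _ (funext fun i => by by_cases h : ev i = 0 <;> simp [h] <;> field_simp)
  · exact hstar _
  · rw [hCdec, key, key]
    congr 1
    congr 1
    exact congrArg _ (funext fun i => by by_cases h : ev i = 0 <;> simp [h, mul_comm] <;> field_simp)

lemma pinv_exists {k l : Type*} [Fintype k] [Fintype l] (B : Matrix k l ℝ) :
    ∃ X : Matrix l k ℝ,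
      B * X * B = B ∧ X * B * X = X ∧ (B * X)ᵀ = B * X ∧ (X * B)ᵀ = X * B := by
  classical
  have hCsym : (Bᵀ * B)ᵀ = Bᵀ * B := by
    rw [Matrix.transpose_mul, Matrix.transpose_transpose]
  obtain ⟨Y, hY1, hY2, hY3, hY4⟩ := sympinv_exists (Bᵀ * B) hCsym
  simp only [← Matrix.mul_assoc] at hY1 hY2 hY4
  have hR : B * Y * Bᵀ * B = B := by
    have hRR : (B - B * Y * Bᵀ * B)ᵀ * (B - B * Y * Bᵀ * B) = 0 := by
      simp only [Matrix.transpose_sub, Matrix.transpose_mul, Matrix.transpose_transpose, hY3,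
        Matrix.sub_mul, Matrix.mul_sub, ← Matrix.mul_assoc]
      simp only [Matrix.mul_assoc (Bᵀ * B * Y * Bᵀ * B)] at *
      simp only [← Matrix.mul_assoc, hY1]
      abel
    have h0 : B - B * Y * Bᵀ * B = 0 := by
      have := Matrix.conjTranspose_mul_self_eq_zero (A := B - B * Y * Bᵀ * B)
      rw [conjTranspose_eq_transpose_of_trivial] at this
      exact this.mp hRR
    exact (sub_eq_zero.mp h0).symm
  refine ⟨Y * Bᵀ, ?_, ?_, ?_, ?_⟩
  · simp only [← Matrix.mul_assoc]; exact hR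
  · simp only [← Matrix.mul_assoc]; rw [hY2]
  · simp only [← Matrix.mul_assoc, Matrix.transpose_mul, Matrix.transpose_transpose, hY3]
  · simp only [← Matrix.mul_assoc, Matrix.transpose_mul, Matrix.transpose_transpose, hY3]
    exact hY4

lemma pinv_unique {k l : Type*} [Fintype k] [Fintype l] (B : Matrix k l ℝ)
    {X Y : Matrix l k ℝ}
    (hX1 : B * X * B = B) (hX2 : X * B * X = X) (hX3 : (B * X)ᵀ = B * X)
    (hX4 : (X * B)ᵀ = X * B)
    (hY1 : B * Y * B = B) (hY2 : Y * B * Y = Y) (hY3 : (B * Y)ᵀ = B * Y)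
    (hY4 : (Y * B)ᵀ = Y * B) : X = Y := by
  have h1 : B * X = B * Y := by
    calc B * X = (B * X)ᵀ := hX3.symm
      _ = (B * Y * B * X)ᵀ := by rw [hY1]
      _ = ((B * Y) * (B * X))ᵀ := by rw [Matrix.mul_assoc (B*Y)]
      _ = (B * X)ᵀ * (B * Y)ᵀ := by rw [Matrix.transpose_mul]
      _ = (B * X) * (B * Y) := by rw [hX3, hY3]
      _ = (B * X * B) * Y := by simp only [Matrix.mul_assoc]
      _ = B * Y := by rw [hX1]
  have h2 : X * B = Y * B := by
    calc X * B = (X * B)ᵀ := hX4.symm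
      _ = (X * (B * Y * B))ᵀ := by rw [hY1]
      _ = ((X * B) * (Y * B))ᵀ := by simp only [Matrix.mul_assoc]
      _ = (Y * B)ᵀ * (X * B)ᵀ := by rw [Matrix.transpose_mul]
      _ = (Y * B) * (X * B) := by rw [hX4, hY4]
      _ = Y * (B * X * B) := by simp only [Matrix.mul_assoc]
      _ = Y * B := by rw [hX1]
  calc X = X * B * X := hX2.symm
    _ = X * B * Y := by rw [Matrix.mul_assoc, h1, ← Matrix.mul_assoc]
    _ = Y * B * Y := by rw [h2]
    _ = Y := hY2

lemma mpinv_spec {k l : Type*} [Fintype k] [Fintype l] (B : Matrix k l ℝ) :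
    B * mpinv B * B = B ∧ mpinv B * B * mpinv B = mpinv B ∧
      (B * mpinv B)ᵀ = B * mpinv B ∧ (mpinv B * B)ᵀ = mpinv B * B := by
  rw [mpinv, dif_pos (pinv_exists B)]
  exact (pinv_exists B).choose_spec

lemma mpinv_transpose {k l : Type*} [Fintype k] [Fintype l] (B : Matrix k l ℝ) :
    mpinv Bᵀ = (mpinv B)ᵀ := by
  obtain ⟨h1, h2, h3, h4⟩ := mpinv_spec B
  obtain ⟨g1, g2, g3, g4⟩ := mpinv_spec Bᵀ
  refine pinv_unique Bᵀ g1 g2 g3 g4 ?_ ?_ ?_ ?_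
  · rw [← Matrix.transpose_mul, ← Matrix.transpose_mul, ← Matrix.mul_assoc, h1]
  · rw [← Matrix.transpose_mul, ← Matrix.transpose_mul, ← Matrix.mul_assoc, h2]
  · rw [← Matrix.transpose_mul, Matrix.transpose_transpose, h4]
  · rw [← Matrix.transpose_mul, Matrix.transpose_transpose, h3]

lemma mpinv_symm {l : Type*} [Fintype l] {B : Matrix l l ℝ} (hB : Bᵀ = B) :
    (mpinv B)ᵀ = mpinv B := by
  rw [← mpinv_transpose, hB]

/-! ### Auxiliary lemmas about `Pmat` and `Zmat` -/

lemma dot_mulVec_symm {q : ℕ} (Q : Matrix (Fin q) (Fin q) ℝ) (hQ : Qᵀ = Q)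
    (v w : Fin q → ℝ) : v ⬝ᵥ Q *ᵥ w = (Q *ᵥ v) ⬝ᵥ w := by
  rw [Matrix.dotProduct_mulVec, ← Matrix.mulVec_transpose, hQ]

section ZmatLemmas

variable {m n p : ℕ} (A : Matrix (Fin m) (Fin n) ℝ) (M : Matrix (Fin n) (Fin n) ℝ)
  (S : Matrix (Fin n) (Fin p) ℝ)

lemma ASP_eq_zero : A * S * Pmat A S = 0 := by
  rw [Pmat, Matrix.mul_sub, Matrix.mul_one, ← Matrix.mul_assoc, (mpinv_spec (A * S)).1,
    sub_self]

lemma A_mul_Zmat : A * Zmat A M S = 0 := by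
  rw [Zmat]
  simp only [← Matrix.mul_assoc]
  rw [ASP_eq_zero]
  simp

lemma Bm_symm (hM : Mᵀ = M) :
    ((Pmat A S)ᵀ * Sᵀ * M * S * Pmat A S)ᵀ = (Pmat A S)ᵀ * Sᵀ * M * S * Pmat A S := by
  simp only [Matrix.transpose_mul, Matrix.transpose_transpose, hM, Matrix.mul_assoc]

lemma Zmat_symm (hM : Mᵀ = M) : (Zmat A M S)ᵀ = Zmat A M S := by
  rw [Zmat]
  set W := mpinv ((Pmat A S)ᵀ * Sᵀ * M * S * Pmat A S) with hWdef
  have hWsym : Wᵀ = W := mpinv_symm (Bm_symm A M S hM)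
  simp only [Matrix.transpose_mul, Matrix.transpose_transpose, hWsym, Matrix.mul_assoc]

lemma Zmat_M_Zmat (hM : Mᵀ = M) : Zmat A M S * M * Zmat A M S = Zmat A M S := by
  rw [Zmat]
  set Pm := Pmat A S with hPm
  set W := mpinv (Pmᵀ * Sᵀ * M * S * Pm) with hW
  have hspec : W * (Pmᵀ * Sᵀ * M * S * Pm) * W = W := (mpinv_spec _).2.1
  have hWgen : ∀ Q : Matrix (Fin p) (Fin n) ℝ,
      W * (Pmᵀ * (Sᵀ * (M * (S * (Pm * (W * Q)))))) = W * Q := by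
    intro Q
    calc W * (Pmᵀ * (Sᵀ * (M * (S * (Pm * (W * Q))))))
        = W * (Pmᵀ * Sᵀ * M * S * Pm) * W * Q := by simp only [Matrix.mul_assoc]
      _ = W * Q := by rw [hspec]
  simp only [Matrix.mul_assoc]
  rw [hWgen]

lemma Zmat_psd (hM : M.PosSemidef) (x : Fin n → ℝ) :
    0 ≤ x ⬝ᵥ (Zmat A M S).mulVec x := by
  have hMsym : Mᵀ = M := by
    have := hM.1
    rwa [Matrix.IsHermitian, conjTranspose_eq_transpose_of_trivial] at this
  set Z0 := Zmat A M S with hZ0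
  have hsym : Z0ᵀ = Z0 := Zmat_symm A M S hMsym
  have hzmz : Z0 * M * Z0 = Z0 := Zmat_M_Zmat A M S hMsym
  have : x ⬝ᵥ Z0 *ᵥ x = (Z0 *ᵥ x) ⬝ᵥ (M *ᵥ (Z0 *ᵥ x)) := by
    calc x ⬝ᵥ Z0 *ᵥ x = x ⬝ᵥ ((Z0 * (M * Z0)) *ᵥ x) := by
          rw [← Matrix.mul_assoc, hzmz]
      _ = x ⬝ᵥ (Z0 *ᵥ ((M * Z0) *ᵥ x)) := by rw [Matrix.mulVec_mulVec]
      _ = (Z0 *ᵥ x) ⬝ᵥ ((M * Z0) *ᵥ x) := dot_mulVec_symm Z0 hsym _ _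
      _ = (Z0 *ᵥ x) ⬝ᵥ (M *ᵥ (Z0 *ᵥ x)) := by rw [Matrix.mulVec_mulVec]
  rw [this]
  simpa using hM.dotProduct_mulVec_nonneg (Z0 *ᵥ x)

end ZmatLemmas

lemma dotProduct_finsum {q : ℕ} {ι : Type*} [Fintype ι] (x : Fin q → ℝ) (w : ι → Fin q → ℝ) :
    x ⬝ᵥ (∑ i, w i) = ∑ i, x ⬝ᵥ w i := by
  simp only [dotProduct, Finset.sum_apply, Finset.mul_sum]
  exact Finset.sum_comm

lemma sum_mulVec' {q r : ℕ} {ι : Type*} [Fintype ι] (Q : ι → Matrix (Fin q) (Fin r) ℝ)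
    (v : Fin r → ℝ) : (∑ i, Q i) *ᵥ v = ∑ i, Q i *ᵥ v :=
  map_sum (AddMonoidHom.mk' (fun Q : Matrix (Fin q) (Fin r) ℝ => Q *ᵥ v)
    (fun a b => Matrix.add_mulVec a b v)) Q Finset.univ

/-- linear convergence of RSD in the smooth strongly convex case:
`E[f(x^k)] − f* ≤ (1 − σ_Z)^k (f(x⁰) − f*)`. -/
theorem stmt11 {m n N : ℕ} (A : Matrix (Fin m) (Fin n) ℝ) (b : Fin m → ℝ)
    (x0 : Fin n → ℝ) (hx0 : A.mulVec x0 = b)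
    (M : Matrix (Fin n) (Fin n) ℝ) (hM : M.PosSemidef)
    (hMpd : ∀ u : Fin n → ℝ, A.mulVec u = 0 → u ≠ 0 → 0 < u ⬝ᵥ M.mulVec u)
    (f : (Fin n → ℝ) → ℝ) (hdiff : Differentiable ℝ f)
    (hsmooth : ∀ x y : Fin n → ℝ, A.mulVec x = b → A.mulVec y = b →
      f y ≤ f x + gradv f x ⬝ᵥ (y - x) + (1 / 2) * ((y - x) ⬝ᵥ M.mulVec (y - x)))
    (p : Fin N → ℕ) (S : ∀ i : Fin N, Matrix (Fin n) (Fin (p i)) ℝ)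
    (P : Fin N → ℝ) (hP : ∀ i, 0 ≤ P i) (hPsum : ∑ i, P i = 1)
    (Z : Matrix (Fin n) (Fin n) ℝ) (hZ : Z = ∑ i, P i • Zmat A M (S i))
    (hpd : ∀ u : Fin n → ℝ, A.mulVec u = 0 → u ≠ 0 → 0 < u ⬝ᵥ Z.mulVec u)
    (σZ : ℝ) (hσ : 0 < σZ)
    (hsc : ∀ x y : Fin n → ℝ, A.mulVec x = b → A.mulVec y = b →
      f x ≥ f y + gradv f y ⬝ᵥ (x - y) +
        (σZ / 2) * ((x - y) ⬝ᵥ (mpinv Z).mulVec (x - y)))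
    (fstar : ℝ) (hfs : ∀ x : Fin n → ℝ, A.mulVec x = b → fstar ≤ f x)
    (hfattained : ∃ xs : Fin n → ℝ, A.mulVec xs = b ∧ f xs = fstar)
    (X : ∀ k : ℕ, (Fin k → Fin N) → (Fin n → ℝ))
    (hX0 : ∀ ω : Fin 0 → Fin N, X 0 ω = x0)
    (hXstep : ∀ (k : ℕ) (ω : Fin (k + 1) → Fin N),
      X (k + 1) ω = X k (fun j => ω j.castSucc) -
        (Zmat A M (S (ω (Fin.last k)))).mulVec (gradv f (X k (fun j => ω j.castSucc))))
    (k : ℕ) :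
    (∑ ω : Fin k → Fin N, (∏ j, P (ω j)) * f (X k ω)) - fstar ≤
      (1 - σZ) ^ k * (f x0 - fstar) := by
  classical
  have hMsym : Mᵀ = M := by
    have := hM.1
    rwa [Matrix.IsHermitian, conjTranspose_eq_transpose_of_trivial] at this
  have hZsym : Zᵀ = Z := by
    rw [hZ, Matrix.transpose_sum]
    exact Finset.sum_congr rfl fun i _ => by
      rw [Matrix.transpose_smul, Zmat_symm A M (S i) hMsym]
  have hZpsd : ∀ x : Fin n → ℝ, 0 ≤ x ⬝ᵥ Z *ᵥ x := by
    intro x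
    rw [hZ, sum_mulVec', dotProduct_finsum]
    refine Finset.sum_nonneg fun i _ => ?_
    rw [Matrix.smul_mulVec, dotProduct_smul, smul_eq_mul]
    exact mul_nonneg (hP i) (Zmat_psd A M (S i) hM x)
  have hquad : ∀ x : Fin n → ℝ, x ⬝ᵥ Z *ᵥ x = ∑ i, P i * (x ⬝ᵥ Zmat A M (S i) *ᵥ x) := by
    intro x
    rw [hZ, sum_mulVec', dotProduct_finsum]
    exact Finset.sum_congr rfl fun i _ => by
      rw [Matrix.smul_mulVec, dotProduct_smul, smul_eq_mul]
  have hAZi : ∀ (i : Fin N) (v : Fin n → ℝ), A *ᵥ (Zmat A M (S i) *ᵥ v) = 0 := by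
    intro i v
    rw [Matrix.mulVec_mulVec, A_mul_Zmat, Matrix.zero_mulVec]
  have hAZmat : A * Z = 0 := by
    rw [hZ, Matrix.mul_sum]
    refine Finset.sum_eq_zero fun i _ => ?_
    rw [Matrix.mul_smul, A_mul_Zmat, smul_zero]
  have hAZ : ∀ v : Fin n → ℝ, A *ᵥ (Z *ᵥ v) = 0 := fun v => by
    rw [Matrix.mulVec_mulVec, hAZmat, Matrix.zero_mulVec]
  -- every vector in `ker A` is in the range of `Z`
  have surj : ∀ h : Fin n → ℝ, A *ᵥ h = 0 → ∃ w, Z *ᵥ w = h := by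
    intro h hh
    set K := LinearMap.ker (Matrix.mulVecLin A) with hK
    have hmem : ∀ x ∈ K, Matrix.mulVecLin Z x ∈ K := by
      intro x hx
      simp only [hK, LinearMap.mem_ker, Matrix.mulVecLin_apply] at *
      exact hAZ x
    set φ : K →ₗ[ℝ] K := (Matrix.mulVecLin Z).restrict hmem with hφ
    have hinj : Function.Injective φ := by
      rw [← LinearMap.ker_eq_bot, LinearMap.ker_eq_bot']
      intro u hu
      by_contra hne
      have hu0 : (u : Fin n → ℝ) ≠ 0 := fun h0 => hne (by
        apply Subtype.ext
        simpa using h0)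
      have hZu : Z *ᵥ (u : Fin n → ℝ) = 0 := by
        have := congrArg Subtype.val hu
        simpa [hφ, LinearMap.restrict_apply, Matrix.mulVecLin_apply] using this
      have hu2 : A *ᵥ (u : Fin n → ℝ) = 0 := by
        have h2 : (u : Fin n → ℝ) ∈ LinearMap.ker (Matrix.mulVecLin A) := u.2
        rwa [LinearMap.mem_ker, Matrix.mulVecLin_apply] at h2
      have hlt := hpd (u : Fin n → ℝ) hu2 hu0
      rw [hZu] at hlt
      simp at hlt
    have hsurj : Function.Surjective φ := LinearMap.injective_iff_surjective.mp hinj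
    obtain ⟨w, hw⟩ := hsurj ⟨h, by
      show h ∈ LinearMap.ker (Matrix.mulVecLin A)
      rw [LinearMap.mem_ker, Matrix.mulVecLin_apply]
      exact hh⟩
    refine ⟨(w : Fin n → ℝ), ?_⟩
    have := congrArg Subtype.val hw
    simpa [hφ, LinearMap.restrict_apply, Matrix.mulVecLin_apply] using this
  -- strong convexity consequence
  have claim1 : ∀ y : Fin n → ℝ, A *ᵥ y = b →
      2 * σZ * (f y - fstar) ≤ gradv f y ⬝ᵥ Z *ᵥ gradv f y := by
    intro y hy
    obtain ⟨xs, hxs, hfxs⟩ := hfattained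
    have hker : A *ᵥ (xs - y) = 0 := by
      rw [Matrix.mulVec_sub, hxs, hy, sub_self]
    obtain ⟨w, hw⟩ := surj _ hker
    have hineq := hsc xs y hxs hy
    rw [← hw] at hineq
    set g := gradv f y with hg
    have e2 : (Z *ᵥ w) ⬝ᵥ (mpinv Z) *ᵥ (Z *ᵥ w) = w ⬝ᵥ Z *ᵥ w := by
      calc (Z *ᵥ w) ⬝ᵥ (mpinv Z) *ᵥ (Z *ᵥ w)
          = (Z *ᵥ w) ⬝ᵥ ((mpinv Z * Z) *ᵥ w) := by rw [Matrix.mulVec_mulVec]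
        _ = w ⬝ᵥ (Z *ᵥ ((mpinv Z * Z) *ᵥ w)) := (dot_mulVec_symm Z hZsym _ _).symm
        _ = w ⬝ᵥ ((Z * (mpinv Z * Z)) *ᵥ w) := by rw [Matrix.mulVec_mulVec]
        _ = w ⬝ᵥ Z *ᵥ w := by rw [← Matrix.mul_assoc, (mpinv_spec Z).1]
    rw [e2, hfxs] at hineq
    have sq : 0 ≤ (g + σZ • w) ⬝ᵥ Z *ᵥ (g + σZ • w) := hZpsd _
    have hswap : w ⬝ᵥ Z *ᵥ g = g ⬝ᵥ Z *ᵥ w := by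
      rw [dot_mulVec_symm Z hZsym w g, dotProduct_comm]
    have expand : (g + σZ • w) ⬝ᵥ Z *ᵥ (g + σZ • w)
        = g ⬝ᵥ Z *ᵥ g + 2 * σZ * (g ⬝ᵥ Z *ᵥ w) + σZ ^ 2 * (w ⬝ᵥ Z *ᵥ w) := by
      simp only [Matrix.mulVec_add, Matrix.mulVec_smul, add_dotProduct,
        dotProduct_add, smul_dotProduct, dotProduct_smul, smul_eq_mul]
      rw [hswap]; ring
    rw [expand] at sq
    have h3 : g ⬝ᵥ Z *ᵥ w + σZ / 2 * (w ⬝ᵥ Z *ᵥ w) ≤ fstar - f y := by linarith [hineq]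
    have h4 : σZ * (g ⬝ᵥ Z *ᵥ w + σZ / 2 * (w ⬝ᵥ Z *ᵥ w)) ≤ σZ * (fstar - f y) :=
      mul_le_mul_of_nonneg_left h3 hσ.le
    nlinarith [sq, h4]
  have hfeas_next : ∀ (x : Fin n → ℝ) (i : Fin N) (v : Fin n → ℝ), A *ᵥ x = b →
      A *ᵥ (x - Zmat A M (S i) *ᵥ v) = b := by
    intro x i v hx
    rw [Matrix.mulVec_sub, hAZi, hx, sub_zero]
  have claim2 : ∀ x : Fin n → ℝ, A *ᵥ x = b →
      ∑ i, P i * f (x - Zmat A M (S i) *ᵥ gradv f x)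
        ≤ f x - 1 / 2 * (gradv f x ⬝ᵥ Z *ᵥ gradv f x) := by
    intro x hx
    set g := gradv f x with hg
    have per : ∀ i : Fin N, f (x - Zmat A M (S i) *ᵥ g)
        ≤ f x - 1 / 2 * (g ⬝ᵥ Zmat A M (S i) *ᵥ g) := by
      intro i
      set Zi := Zmat A M (S i) with hZi
      have hZisym : Ziᵀ = Zi := Zmat_symm A M (S i) hMsym
      have hzmz : Zi * M * Zi = Zi := Zmat_M_Zmat A M (S i) hMsym
      have h := hsmooth x (x - Zi *ᵥ g) hx (hfeas_next x i g hx)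
      have hd : (x - Zi *ᵥ g) - x = -(Zi *ᵥ g) := by abel
      rw [hd] at h
      have e : (-(Zi *ᵥ g)) ⬝ᵥ M *ᵥ (-(Zi *ᵥ g)) = g ⬝ᵥ Zi *ᵥ g := by
        rw [Matrix.mulVec_neg, dotProduct_neg, neg_dotProduct, neg_neg]
        calc (Zi *ᵥ g) ⬝ᵥ M *ᵥ (Zi *ᵥ g)
            = g ⬝ᵥ (Zi *ᵥ (M *ᵥ (Zi *ᵥ g))) := (dot_mulVec_symm Zi hZisym g _).symm
          _ = g ⬝ᵥ ((Zi * M * Zi) *ᵥ g) := by rw [Matrix.mulVec_mulVec, Matrix.mulVec_mulVec]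
          _ = g ⬝ᵥ Zi *ᵥ g := by rw [hzmz]
      rw [e, dotProduct_neg] at h
      linarith
    calc ∑ i, P i * f (x - Zmat A M (S i) *ᵥ g)
        ≤ ∑ i, P i * (f x - 1 / 2 * (g ⬝ᵥ Zmat A M (S i) *ᵥ g)) :=
          Finset.sum_le_sum fun i _ => mul_le_mul_of_nonneg_left (per i) (hP i)
      _ = ∑ i, (P i * f x - 1 / 2 * (P i * (g ⬝ᵥ Zmat A M (S i) *ᵥ g))) :=
          Finset.sum_congr rfl fun i _ => by ring
      _ = (∑ i, P i) * f x - 1 / 2 * ∑ i, P i * (g ⬝ᵥ Zmat A M (S i) *ᵥ g) := by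
          rw [Finset.sum_sub_distrib, ← Finset.sum_mul, ← Finset.mul_sum]
      _ = f x - 1 / 2 * (g ⬝ᵥ Z *ᵥ g) := by rw [hPsum, one_mul, hquad g]
  have claim3 : ∀ x : Fin n → ℝ, A *ᵥ x = b →
      fstar ≤ ∑ i, P i * f (x - Zmat A M (S i) *ᵥ gradv f x) := by
    intro x hx
    calc fstar = ∑ i, P i * fstar := by rw [← Finset.sum_mul, hPsum, one_mul]
      _ ≤ ∑ i, P i * f (x - Zmat A M (S i) *ᵥ gradv f x) :=
        Finset.sum_le_sum fun i _ =>
          mul_le_mul_of_nonneg_left (hfs _ (hfeas_next x i _ hx)) (hP i)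
  have claimMain : ∀ x : Fin n → ℝ, A *ᵥ x = b →
      (∑ i, P i * f (x - Zmat A M (S i) *ᵥ gradv f x)) - fstar
        ≤ (1 - σZ) * (f x - fstar) := by
    intro x hx
    have h2 := claim2 x hx
    have h1 := claim1 x hx
    nlinarith [h1, h2]
  have feas : ∀ (k : ℕ) (ω : Fin k → Fin N), A *ᵥ X k ω = b := by
    intro k
    induction k with
    | zero => intro ω; rw [hX0 ω]; exact hx0
    | succ k ih =>
      intro ω
      rw [hXstep k ω]
      exact hfeas_next _ _ _ (ih _)
  have hsplit : ∀ (k : ℕ) (F : (Fin (k + 1) → Fin N) → ℝ),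
      ∑ ω, F ω = ∑ ω' : Fin k → Fin N, ∑ i, F (Fin.snoc ω' i) := by
    intro k F
    rw [← Equiv.sum_comp (Fin.snocEquiv (fun _ => Fin N)) F, Fintype.sum_prod_type,
      Finset.sum_comm]
    rfl
  have hprod : ∀ (k : ℕ) (ω' : Fin k → Fin N) (i : Fin N),
      (∏ j : Fin (k + 1), P (Fin.snoc (α := fun _ => Fin N) ω' i j)) = (∏ j, P (ω' j)) * P i := by
    intro k ω' i
    rw [Fin.prod_univ_castSucc]
    simp [Fin.snoc_castSucc, Fin.snoc_last]
  have hWsum : ∀ k : ℕ, ∑ ω : Fin k → Fin N, ∏ j, P (ω j) = 1 := by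
    intro k
    induction k with
    | zero => simp
    | succ k ih =>
      rw [hsplit k (fun ω => ∏ j, P (ω j))]
      have inner : ∀ ω' : Fin k → Fin N,
          ∑ i, ∏ j : Fin (k + 1), P (Fin.snoc (α := fun _ => Fin N) ω' i j) = ∏ j, P (ω' j) := by
        intro ω'
        rw [Finset.sum_congr rfl fun i _ => hprod k ω' i, ← Finset.mul_sum, hPsum, mul_one]
      rw [Finset.sum_congr rfl fun ω' _ => inner ω', ih]
  have hXval : ∀ (k : ℕ) (ω' : Fin k → Fin N) (i : Fin N),
      X (k + 1) (Fin.snoc ω' i) = X k ω' - Zmat A M (S i) *ᵥ gradv f (X k ω') := by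
    intro k ω' i
    have hlast : Fin.snoc (α := fun _ => Fin N) ω' i (Fin.last k) = i := by simp
    have hcast : (fun j : Fin k => Fin.snoc (α := fun _ => Fin N) ω' i j.castSucc) = ω' := by
      funext j; simp
    rw [hXstep k (Fin.snoc ω' i), hcast, hlast]
  induction k with
  | zero =>
    have h0 : ∑ ω : Fin 0 → Fin N, (∏ j, P (ω j)) * f (X 0 ω) = f x0 := by
      have hterm : ∀ ω : Fin 0 → Fin N, (∏ j, P (ω j)) * f (X 0 ω) = f x0 := by
        intro ω; rw [hX0 ω]; simp
      rw [Finset.sum_congr rfl fun ω _ => hterm ω]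
      simp
    rw [h0, pow_zero, one_mul]
  | succ k ih =>
    have hre : ∑ ω : Fin (k + 1) → Fin N, (∏ j, P (ω j)) * f (X (k + 1) ω)
        = ∑ ω' : Fin k → Fin N, (∏ j, P (ω' j)) *
            ∑ i, P i * f (X k ω' - Zmat A M (S i) *ᵥ gradv f (X k ω')) := by
      rw [hsplit k (fun ω => (∏ j, P (ω j)) * f (X (k + 1) ω))]
      refine Finset.sum_congr rfl fun ω' _ => ?_
      rw [Finset.mul_sum]
      refine Finset.sum_congr rfl fun i _ => ?_
      rw [hprod k ω' i, hXval k ω' i]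
      ring
    have hbd : ∀ ω' : Fin k → Fin N,
        (∏ j, P (ω' j)) * ∑ i, P i * f (X k ω' - Zmat A M (S i) *ᵥ gradv f (X k ω'))
          ≤ (∏ j, P (ω' j)) * (fstar + (1 - σZ) * (f (X k ω') - fstar)) := by
      intro ω'
      refine mul_le_mul_of_nonneg_left ?_ (Finset.prod_nonneg fun j _ => hP _)
      have := claimMain (X k ω') (feas k ω')
      linarith
    have hEle : ∑ ω : Fin (k + 1) → Fin N, (∏ j, P (ω j)) * f (X (k + 1) ω)
        ≤ fstar + (1 - σZ) *
            ((∑ ω' : Fin k → Fin N, (∏ j, P (ω' j)) * f (X k ω')) - fstar) := by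
      rw [hre]
      have step1 : ∑ ω' : Fin k → Fin N, (∏ j, P (ω' j)) *
            ∑ i, P i * f (X k ω' - Zmat A M (S i) *ᵥ gradv f (X k ω'))
          ≤ ∑ ω' : Fin k → Fin N,
              (∏ j, P (ω' j)) * (fstar + (1 - σZ) * (f (X k ω') - fstar)) :=
        Finset.sum_le_sum fun ω' _ => hbd ω'
      have step2 : ∑ ω' : Fin k → Fin N,
            (∏ j, P (ω' j)) * (fstar + (1 - σZ) * (f (X k ω') - fstar))
          = fstar + (1 - σZ) *
              ((∑ ω' : Fin k → Fin N, (∏ j, P (ω' j)) * f (X k ω')) - fstar) := by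
        have expand : ∀ ω' : Fin k → Fin N,
            (∏ j, P (ω' j)) * (fstar + (1 - σZ) * (f (X k ω') - fstar))
              = (fstar - (1 - σZ) * fstar) * (∏ j, P (ω' j))
                  + (1 - σZ) * ((∏ j, P (ω' j)) * f (X k ω')) := fun ω' => by ring
        rw [Finset.sum_congr rfl fun ω' _ => expand ω', Finset.sum_add_distrib,
          ← Finset.mul_sum, ← Finset.mul_sum, hWsum k]
        ring
      linarith [step1, step2.le, step2.ge]
    have hElow : fstar ≤ ∑ ω' : Fin k → Fin N, (∏ j, P (ω' j)) * f (X k ω') := by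
      calc fstar = ∑ ω' : Fin k → Fin N, (∏ j, P (ω' j)) * fstar := by
            rw [← Finset.sum_mul, hWsum k, one_mul]
        _ ≤ _ := Finset.sum_le_sum fun ω' _ =>
            mul_le_mul_of_nonneg_left (hfs _ (feas k ω'))
              (Finset.prod_nonneg fun j _ => hP _)
    rcases le_or_gt σZ 1 with hcase | hcase
    · have h1 : (1 - σZ) *
            ((∑ ω' : Fin k → Fin N, (∏ j, P (ω' j)) * f (X k ω')) - fstar)
          ≤ (1 - σZ) * ((1 - σZ) ^ k * (f x0 - fstar)) :=
        mul_le_mul_of_nonneg_left (by linarith [ih]) (by linarith)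
      have h2 : (1 - σZ) * ((1 - σZ) ^ k * (f x0 - fstar))
          = (1 - σZ) ^ (k + 1) * (f x0 - fstar) := by ring
      linarith [hEle, h1]
    · have hfx0le : f x0 ≤ fstar := by
        have hA := claimMain x0 hx0
        have hB := claim3 x0 hx0
        have hC := hfs x0 hx0
        nlinarith [hA, hB, hC, hcase]
      have hfx0 : f x0 = fstar := le_antisymm hfx0le (hfs x0 hx0)
      have hrhs : (1 - σZ) ^ (k + 1) * (f x0 - fstar) = 0 := by rw [hfx0]; ring
      rw [hrhs]
      have hneg : (1 - σZ) *
          ((∑ ω' : Fin k → Fin N, (∏ j, P (ω' j)) * f (X k ω')) - fstar) ≤ 0 :=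
        mul_nonpos_of_nonpos_of_nonneg (by linarith) (by linarith [hElow])
      linarith [hEle, hneg]
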